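/- Let U be an open subset of a finite-dimensional real vector space E, g a smooth possibly degenerate metric on U, and D a Koszul derivative for g. Then the Riemann curvature tensor R(X,Y,Z,T) := g(D_X D_Y Z − D_Y D_X Z − D_{[X,Y]} Z, T) satisfies the first Bianchi identity: R(Y,Z,X,T) + R(Z,X,Y,T) + R(X,Y,Z,T) = 0 for all smooth vector fields X, Y, Z, T. -/

import Mathlib

variable {E : Type*} [NormedAddCommGroup E] [NormedSpace ℝ E] [FiniteDimensional ℝ E]

/-- The action `(Xf)(p) = df_p(X(p))` of a vector field on a function. -/
noncomputable def vAct (X : E → E) (f : E → ℝ) : E → ℝ := fun p => fderiv ℝ f p (X p)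

/-- The Lie bracket `[X,Y](p) = dY_p(X(p)) − dX_p(Y(p))` of vector fields. -/
noncomputable def vBracket (X Y : E → E) : E → E :=
  fun p => fderiv ℝ Y p (X p) - fderiv ℝ X p (Y p)

/-- The function `p ↦ g_p(Y(p), Z(p))`. -/
noncomputable def gFun (g : E → E →L[ℝ] E →L[ℝ] ℝ) (Y Z : E → E) : E → ℝ := fun p => g p (Y p) (Z p)

/-- The Koszul form
`K(X,Y,Z) := ½{X g(Y,Z) + Y g(Z,X) − Z g(X,Y) − g(X,[Y,Z]) + g(Y,[Z,X]) + g(Z,[X,Y])}`. -/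
noncomputable def koszul (g : E → E →L[ℝ] E →L[ℝ] ℝ) (X Y Z : E → E) : E → ℝ := fun p =>
  (1/2 : ℝ) * (vAct X (gFun g Y Z) p + vAct Y (gFun g Z X) p - vAct Z (gFun g X Y) p
    - gFun g X (vBracket Y Z) p + gFun g Y (vBracket Z X) p + gFun g Z (vBracket X Y) p)

/-- The Riemann curvature tensor of a Koszul derivative `D`:
`R(X,Y,Z,T) := g(D_X D_Y Z − D_Y D_X Z − D_[X,Y] Z, T)`. -/
noncomputable def riem (g : E → E →L[ℝ] E →L[ℝ] ℝ) (D : (E → E) → (E → E) → (E → E))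
    (X Y Z T : E → E) : E → ℝ := fun p =>
  g p (D X (D Y Z) p - D Y (D X Z) p - D (vBracket X Y) Z p) (T p)

/-! ### Auxiliary lemmas -/

set_option linter.unusedSectionVars false

lemma contDiffOn_gFun {U : Set E} (g : E → E →L[ℝ] E →L[ℝ] ℝ) {A B : E → E}
    (hg : ContDiffOn ℝ (⊤:ℕ∞) g U) (hA : ContDiffOn ℝ (⊤:ℕ∞) A U)
    (hB : ContDiffOn ℝ (⊤:ℕ∞) B U) : ContDiffOn ℝ (⊤:ℕ∞) (gFun g A B) U :=
  (hg.clm_apply hA).clm_apply hB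

lemma contDiffOn_vBracket {U : Set E} (hU : IsOpen U) {A B : E → E}
    (hA : ContDiffOn ℝ (⊤:ℕ∞) A U) (hB : ContDiffOn ℝ (⊤:ℕ∞) B U) :
    ContDiffOn ℝ (⊤:ℕ∞) (vBracket A B) U := by
  have h1 : ContDiffOn ℝ (⊤:ℕ∞) (fderiv ℝ A) U := hA.fderiv_of_isOpen hU (by simp)
  have h2 : ContDiffOn ℝ (⊤:ℕ∞) (fderiv ℝ B) U := hB.fderiv_of_isOpen hU (by simp)
  exact (h2.clm_apply hA).sub (h1.clm_apply hB)

lemma diffAt {F : Type*} [NormedAddCommGroup F] [NormedSpace ℝ F]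
    {U : Set E} (hU : IsOpen U) {f : E → F} (hf : ContDiffOn ℝ (⊤:ℕ∞) f U)
    {p : E} (hp : p ∈ U) : DifferentiableAt ℝ f p :=
  (hf.differentiableOn (by simp)).differentiableAt (hU.mem_nhds hp)

lemma symm2 {U : Set E} (hU : IsOpen U) {f : E → E} (hf : ContDiffOn ℝ (⊤:ℕ∞) f U)
    {p : E} (hp : p ∈ U) (v w : E) :
    fderiv ℝ (fderiv ℝ f) p v w = fderiv ℝ (fderiv ℝ f) p w v :=
  (hf.contDiffAt (hU.mem_nhds hp)).isSymmSndFDerivAt (by rw [minSmoothness_of_isRCLikeNormedField]; exact WithTop.coe_le_coe.mpr (le_top : (2:ℕ∞) ≤ ⊤)) v w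

lemma vAct_congr {U : Set E} (hU : IsOpen U) {f1 f2 : E → ℝ} (h : ∀ q ∈ U, f1 q = f2 q)
    {p : E} (hp : p ∈ U) (A : E → E) : vAct A f1 p = vAct A f2 p := by
  have he : f1 =ᶠ[nhds p] f2 := Filter.eventuallyEq_of_mem (hU.mem_nhds hp) h
  simp only [vAct, he.fderiv_eq]

lemma vBracket_apply (A B : E → E) (p : E) :
    vBracket A B p = fderiv ℝ B p (A p) - fderiv ℝ A p (B p) := rfl

lemma vBracket_antisymm (A B : E → E) (p : E) : vBracket A B p = -vBracket B A p := by
  simp only [vBracket]; abel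

/-- Algebraic identity: `K(X,Y,Z) + K(X,Z,Y) = X g(Y,Z)`. -/
lemma koszul_compat (g : E → E →L[ℝ] E →L[ℝ] ℝ)
    (hsymm : ∀ p : E, ∀ u v : E, g p u v = g p v u) (X Y Z : E → E) (p : E) :
    koszul g X Y Z p + koszul g X Z Y p = vAct X (gFun g Y Z) p := by
  have e : ∀ A B : E → E, gFun g A B = gFun g B A := fun A B => funext fun q => hsymm q _ _
  have b : ∀ A B C : E → E, gFun g A (vBracket B C) p = -gFun g A (vBracket C B) p := by
    intro A B C
    simp only [gFun, vBracket_antisymm B C, map_neg]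
  simp only [koszul]
  rw [e Z Y, e Y X, e X Z, b X Z Y, b Z Y X, b Y X Z]
  ring

/-- Algebraic identity: `K(X,Y,Z) − K(Y,X,Z) = g([X,Y],Z)`. -/
lemma koszul_torsion (g : E → E →L[ℝ] E →L[ℝ] ℝ)
    (hsymm : ∀ p : E, ∀ u v : E, g p u v = g p v u) (X Y Z : E → E) (p : E) :
    koszul g X Y Z p - koszul g Y X Z p = gFun g (vBracket X Y) Z p := by
  have e : ∀ A B : E → E, gFun g A B = gFun g B A := fun A B => funext fun q => hsymm q _ _
  have b : ∀ A B C : E → E, gFun g A (vBracket B C) p = -gFun g A (vBracket C B) p := by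
    intro A B C
    simp only [gFun, vBracket_antisymm B C, map_neg]
  simp only [koszul]
  rw [e X Z, e Z Y, e Y X, b Y X Z, b X Z Y, b Z Y X, e (vBracket X Y) Z]
  ring

/-- Derivative of a bracket. -/
lemma fderiv_vBracket {U : Set E} (hU : IsOpen U) {A B : E → E}
    (hA : ContDiffOn ℝ (⊤:ℕ∞) A U) (hB : ContDiffOn ℝ (⊤:ℕ∞) B U)
    {p : E} (hp : p ∈ U) (v : E) :
    fderiv ℝ (vBracket A B) p v =
      fderiv ℝ (fderiv ℝ B) p v (A p) + fderiv ℝ B p (fderiv ℝ A p v)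
        - fderiv ℝ (fderiv ℝ A) p v (B p) - fderiv ℝ A p (fderiv ℝ B p v) := by
  have hA1 : DifferentiableAt ℝ A p := diffAt hU hA hp
  have hB1 : DifferentiableAt ℝ B p := diffAt hU hB hp
  have hA2 : DifferentiableAt ℝ (fderiv ℝ A) p :=
    diffAt hU (hA.fderiv_of_isOpen hU (by simp)) hp
  have hB2 : DifferentiableAt ℝ (fderiv ℝ B) p :=
    diffAt hU (hB.fderiv_of_isOpen hU (by simp)) hp
  have d1 : fderiv ℝ (fun q => fderiv ℝ B q (A q)) p =
      (fderiv ℝ B p).comp (fderiv ℝ A p) + (fderiv ℝ (fderiv ℝ B) p).flip (A p) :=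
    fderiv_clm_apply hB2 hA1
  have d2 : fderiv ℝ (fun q => fderiv ℝ A q (B q)) p =
      (fderiv ℝ A p).comp (fderiv ℝ B p) + (fderiv ℝ (fderiv ℝ A) p).flip (B p) :=
    fderiv_clm_apply hA2 hB1
  have hs : vBracket A B = fun q => (fun q => fderiv ℝ B q (A q)) q
      - (fun q => fderiv ℝ A q (B q)) q := rfl
  rw [hs, fderiv_fun_sub (hB2.clm_apply hA1) (hA2.clm_apply hB1)]
  simp only [ContinuousLinearMap.coe_sub', Pi.sub_apply, d1, d2,
    ContinuousLinearMap.add_apply, ContinuousLinearMap.coe_comp', Function.comp_apply,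
    ContinuousLinearMap.flip_apply]
  abel

/-- Expansion of a double bracket. -/
lemma double_bracket {U : Set E} (hU : IsOpen U) {A B C : E → E}
    (hA : ContDiffOn ℝ (⊤:ℕ∞) A U) (hB : ContDiffOn ℝ (⊤:ℕ∞) B U)
    (hC : ContDiffOn ℝ (⊤:ℕ∞) C U) {p : E} (hp : p ∈ U) :
    vBracket (vBracket A B) C p =
      fderiv ℝ C p (fderiv ℝ B p (A p)) - fderiv ℝ C p (fderiv ℝ A p (B p))
        - fderiv ℝ (fderiv ℝ B) p (C p) (A p) - fderiv ℝ B p (fderiv ℝ A p (C p))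
        + fderiv ℝ (fderiv ℝ A) p (C p) (B p) + fderiv ℝ A p (fderiv ℝ B p (C p)) := by
  rw [vBracket_apply (vBracket A B) C, fderiv_vBracket hU hA hB hp (C p),
    vBracket_apply A B, map_sub]
  abel

/-- The Jacobi identity for the Lie bracket, at points of `U`. -/
lemma jacobi {U : Set E} (hU : IsOpen U) {X Y Z : E → E}
    (hX : ContDiffOn ℝ (⊤:ℕ∞) X U) (hY : ContDiffOn ℝ (⊤:ℕ∞) Y U)
    (hZ : ContDiffOn ℝ (⊤:ℕ∞) Z U) {p : E} (hp : p ∈ U) :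
    vBracket (vBracket Y Z) X p + vBracket (vBracket Z X) Y p
      + vBracket (vBracket X Y) Z p = 0 := by
  rw [double_bracket hU hY hZ hX hp, double_bracket hU hZ hX hY hp,
    double_bracket hU hX hY hZ hp,
    symm2 hU hX hp (Y p) (Z p), symm2 hU hY hp (Z p) (X p), symm2 hU hZ hp (X p) (Y p)]
  abel

/-- the Riemann curvature tensor satisfies the first Bianchi identity:
`R(Y,Z,X,T) + R(Z,X,Y,T) + R(X,Y,Z,T) = 0` on `U`. -/
theorem riem_first_bianchi
    (U : Set E) (hU : IsOpen U)
    (g : E → E →L[ℝ] E →L[ℝ] ℝ) (hg : ContDiffOn ℝ (⊤ : ℕ∞) g U)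
    (hsymm : ∀ p : E, ∀ u v : E, g p u v = g p v u)
    (D : (E → E) → (E → E) → (E → E))
    (hDsmooth : ∀ X Y : E → E, ContDiffOn ℝ (⊤ : ℕ∞) X U → ContDiffOn ℝ (⊤ : ℕ∞) Y U →
      ContDiffOn ℝ (⊤ : ℕ∞) (D X Y) U)
    (hDK : ∀ X Y Z : E → E, ContDiffOn ℝ (⊤ : ℕ∞) X U → ContDiffOn ℝ (⊤ : ℕ∞) Y U →
      ContDiffOn ℝ (⊤ : ℕ∞) Z U → ∀ p ∈ U, g p (D X Y p) (Z p) = koszul g X Y Z p)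
    (X Y Z T : E → E) (hX : ContDiffOn ℝ (⊤ : ℕ∞) X U) (hY : ContDiffOn ℝ (⊤ : ℕ∞) Y U)
    (hZ : ContDiffOn ℝ (⊤ : ℕ∞) Z U) (hT : ContDiffOn ℝ (⊤ : ℕ∞) T U) :
    ∀ p ∈ U, riem g D Y Z X T p + riem g D Z X Y T p + riem g D X Y Z T p = 0 := by
  intro p hp
  -- metric compatibility: `A g(B,C) = g(D_A B, C) + g(B, D_A C)` on `U`
  have compat : ∀ A B C : E → E, ContDiffOn ℝ (⊤:ℕ∞) A U → ContDiffOn ℝ (⊤:ℕ∞) B U →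
      ContDiffOn ℝ (⊤:ℕ∞) C U → ∀ q ∈ U,
      vAct A (gFun g B C) q = g q (D A B q) (C q) + g q (B q) (D A C q) := by
    intro A B C hA hB hC q hq
    rw [← koszul_compat g hsymm A B C q, ← hDK A B C hA hB hC q hq,
      ← hDK A C B hA hC hB q hq, hsymm q (D A C q) (B q)]
  -- torsion-freeness: `g(D_A B, C) = g(D_B A, C) + g([A,B], C)` on `U`
  have tors : ∀ A B C : E → E, ContDiffOn ℝ (⊤:ℕ∞) A U → ContDiffOn ℝ (⊤:ℕ∞) B U →
      ContDiffOn ℝ (⊤:ℕ∞) C U → ∀ q ∈ U,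
      g q (D A B q) (C q) = g q (D B A q) (C q) + g q (vBracket A B q) (C q) := by
    intro A B C hA hB hC q hq
    have h1 := hDK A B C hA hB hC q hq
    have h2 := hDK B A C hB hA hC q hq
    have h3 := koszul_torsion g hsymm A B C q
    have h4 : gFun g (vBracket A B) C q = g q (vBracket A B q) (C q) := rfl
    rw [h4] at h3
    linarith
  -- expansion of the curvature
  have rexp : ∀ A B C : E → E, riem g D A B C T p =
      g p (D A (D B C) p) (T p) - g p (D B (D A C) p) (T p)
        - g p (D (vBracket A B) C p) (T p) := by
    intro A B C
    simp [riem, map_sub, ContinuousLinearMap.sub_apply]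
  -- the key difference identity for `vAct` terms
  have vdiff : ∀ A B C : E → E, ContDiffOn ℝ (⊤:ℕ∞) A U → ContDiffOn ℝ (⊤:ℕ∞) B U →
      ContDiffOn ℝ (⊤:ℕ∞) C U →
      vAct A (gFun g (D B C) T) p - vAct A (gFun g (D C B) T) p
        = g p (D A (vBracket B C) p) (T p) + g p (vBracket B C p) (D A T p) := by
    intro A B C hA hB hC
    have hDCB : ContDiffOn ℝ (⊤:ℕ∞) (D C B) U := hDsmooth C B hC hB
    have hBBC : ContDiffOn ℝ (⊤:ℕ∞) (vBracket B C) U := contDiffOn_vBracket hU hB hC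
    have heq : ∀ q ∈ U, gFun g (D B C) T q
        = gFun g (D C B) T q + gFun g (vBracket B C) T q := by
      intro q hq
      have h := tors B C T hB hC hT q hq
      simpa only [gFun] using h
    have h1 : vAct A (gFun g (D B C) T) p
        = vAct A (fun q => gFun g (D C B) T q + gFun g (vBracket B C) T q) p :=
      vAct_congr hU heq hp A
    have d1 : DifferentiableAt ℝ (gFun g (D C B) T) p :=
      diffAt hU (contDiffOn_gFun g hg hDCB hT) hp
    have d2 : DifferentiableAt ℝ (gFun g (vBracket B C) T) p :=
      diffAt hU (contDiffOn_gFun g hg hBBC hT) hp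
    have h2 : vAct A (fun q => gFun g (D C B) T q + gFun g (vBracket B C) T q) p
        = vAct A (gFun g (D C B) T) p + vAct A (gFun g (vBracket B C) T) p := by
      simp only [vAct, fderiv_fun_add d1 d2, ContinuousLinearMap.add_apply]
    have h3 := compat A (vBracket B C) T hA hBBC hT p hp
    rw [h1, h2, h3]
    ring
  -- smoothness of brackets and derived fields
  have hBXY := contDiffOn_vBracket hU hX hY
  have hBYZ := contDiffOn_vBracket hU hY hZ
  have hBZX := contDiffOn_vBracket hU hZ hX
  -- curvature leading terms via compatibility
  have curv : ∀ A B C : E → E, ContDiffOn ℝ (⊤:ℕ∞) A U → ContDiffOn ℝ (⊤:ℕ∞) B U →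
      ContDiffOn ℝ (⊤:ℕ∞) C U →
      g p (D A (D B C) p) (T p)
        = vAct A (gFun g (D B C) T) p - g p (D B C p) (D A T p) := by
    intro A B C hA hB hC
    have h := compat A (D B C) T hA (hDsmooth B C hB hC) hT p hp
    linarith
  have c1 := curv X Y Z hX hY hZ
  have c2 := curv Y X Z hY hX hZ
  have c3 := curv Y Z X hY hZ hX
  have c4 := curv Z Y X hZ hY hX
  have c5 := curv Z X Y hZ hX hY
  have c6 := curv X Z Y hX hZ hY
  have v1 := vdiff X Y Z hX hY hZ
  have v2 := vdiff Y Z X hY hZ hX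
  have v3 := vdiff Z X Y hZ hX hY
  have t1 := tors Y Z (D X T) hY hZ (hDsmooth X T hX hT) p hp
  have t2 := tors Z X (D Y T) hZ hX (hDsmooth Y T hY hT) p hp
  have t3 := tors X Y (D Z T) hX hY (hDsmooth Z T hZ hT) p hp
  have b1 := tors (vBracket Y Z) X T hBYZ hX hT p hp
  have b2 := tors (vBracket Z X) Y T hBZX hY hT p hp
  have b3 := tors (vBracket X Y) Z T hBXY hZ hT p hp
  have hjac := jacobi hU hX hY hZ hp
  have jacg : g p (vBracket (vBracket Y Z) X p) (T p)
      + g p (vBracket (vBracket Z X) Y p) (T p)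
      + g p (vBracket (vBracket X Y) Z p) (T p) = 0 := by
    have h : g p (vBracket (vBracket Y Z) X p + vBracket (vBracket Z X) Y p
        + vBracket (vBracket X Y) Z p) (T p) = 0 := by rw [hjac]; simp
    simpa [map_add, ContinuousLinearMap.add_apply] using h
  rw [rexp Y Z X, rexp Z X Y, rexp X Y Z]
  linarith [c1, c2, c3, c4, c5, c6, v1, v2, v3, t1, t2, t3, b1, b2, b3, jacg]
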